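/- Let π be a probability measure on a measurable space X, let η : X×X → [0,∞) be measurable with η(x,y) ≥ C for all x,y and some constant C > 0, and let μ be a probability measure on X with μ ≪ π. Then H(μ∣π) ≤ (1/C)·I_η(μ∣π), i.e., the nonlocal logarithmic Sobolev inequality holds with constant C. -/

import Mathlib

open MeasureTheory
open scoped ENNReal Classical

/-- The integrand of the nonlocal relative Fisher information:
`F(r,s) = (r−s)(log r − log s)` for `r,s > 0`, `F(0,0) = 0`, and
`F(r,0) = F(0,r) = ∞` for `r > 0`. -/
noncomputable def Fent (r s : ℝ) : ℝ≥0∞ :=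
  if 0 < r ∧ 0 < s then ENNReal.ofReal ((r - s) * (Real.log r - Real.log s))
  else if r = 0 ∧ s = 0 then 0
  else ⊤

/-- Relative entropy `H(μ∣ν) = ∫ (g log g − g + 1) dν ∈ [0,∞]` with `g = dμ/dν`,
if `μ ≪ ν`, and `H(μ∣ν) = ∞` otherwise. -/
noncomputable def relEnt {X : Type*} [MeasurableSpace X] (μ ν : Measure X) : ℝ≥0∞ :=
  if μ ≪ ν then
    ∫⁻ x, ENNReal.ofReal ((μ.rnDeriv ν x).toReal * Real.log (μ.rnDeriv ν x).toReal
        - (μ.rnDeriv ν x).toReal + 1) ∂ν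
  else ⊤

/-- The nonlocal Fisher information
`I_η(μ∣π) = (1/2) ∬_{x≠y} F(f(x),f(y)) η(x,y) dπ(x) dπ(y)` with `f = dμ/dπ` if `μ ≪ π`,
and `∞` otherwise. -/
noncomputable def fisher {X : Type*} [MeasurableSpace X]
    (η : X → X → ℝ) (μ π : Measure X) : ℝ≥0∞ :=
  if μ ≪ π then
    (1/2 : ℝ≥0∞) * ∫⁻ x, ∫⁻ y,
      (if x ≠ y then
        Fent (μ.rnDeriv π x).toReal (μ.rnDeriv π y).toReal * ENNReal.ofReal (η x y)
       else 0) ∂π ∂π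
  else ⊤


lemma measurable_Fent : Measurable fun p : ℝ × ℝ => Fent p.1 p.2 := by
  unfold Fent
  apply Measurable.ite
  · exact ((measurableSet_lt measurable_const measurable_fst).inter
      (measurableSet_lt measurable_const measurable_snd))
  · exact ENNReal.measurable_ofReal.comp ((measurable_fst.sub measurable_snd).mul
      ((Real.measurable_log.comp measurable_fst).sub (Real.measurable_log.comp measurable_snd)))
  · apply Measurable.ite _ measurable_const measurable_const
    exact (measurable_fst (measurableSet_singleton 0)).inter
      (measurable_snd (measurableSet_singleton 0))

lemma Fent_self (r : ℝ) (hr : 0 ≤ r) : Fent r r = 0 := by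
  rcases hr.lt_or_eq with h | h
  · simp [Fent, h]
  · simp [Fent, ← h]

lemma phi_nonneg {r : ℝ} (hr : 0 ≤ r) : 0 ≤ r * Real.log r - r + 1 := by
  rcases hr.lt_or_eq with h | h
  · have h1 := Real.log_le_sub_one_of_pos (show (0:ℝ) < r⁻¹ by positivity)
    rw [Real.log_inv] at h1
    have h2 : r * (-Real.log r) ≤ r * (r⁻¹ - 1) :=
      mul_le_mul_of_nonneg_left h1 h.le
    rw [mul_sub, mul_inv_cancel₀ h.ne'] at h2
    nlinarith
  · simp [← h]

lemma Freal_nonneg {r s : ℝ} (hr : 0 < r) (hs : 0 < s) :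
    0 ≤ (r - s) * (Real.log r - Real.log s) := by
  rcases le_total r s with h | h
  · nlinarith [mul_nonneg (by linarith : (0:ℝ) ≤ s - r)
      (by linarith [Real.log_le_log hr h] : (0:ℝ) ≤ Real.log s - Real.log r)]
  · exact mul_nonneg (by linarith) (by linarith [Real.log_le_log hs h])

lemma two_mul_ofReal {a b : ℝ} (ha : 0 ≤ a) (hb : 0 ≤ b) :
    2 * (ENNReal.ofReal a * ENNReal.ofReal b) = ENNReal.ofReal (2 * (a * b)) := by
  rw [← ENNReal.ofReal_mul ha, ENNReal.ofReal_mul (by norm_num : (0:ℝ) ≤ 2),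
    ENNReal.ofReal_ofNat]

lemma fent_key (r s : ℝ) (hr : 0 ≤ r) (hs : 0 ≤ s) :
    ENNReal.ofReal (r * Real.log r - r + 1) + ENNReal.ofReal (s * Real.log s - s + 1)
      + 2 * (ENNReal.ofReal (r - 1) * ENNReal.ofReal (1 - s))
      + 2 * (ENNReal.ofReal (1 - r) * ENNReal.ofReal (s - 1))
    ≤ Fent r s + 2 * (ENNReal.ofReal (r - 1) * ENNReal.ofReal (s - 1))
      + 2 * (ENNReal.ofReal (1 - r) * ENNReal.ofReal (1 - s)) := by
  rcases hr.lt_or_eq with hr' | hr' <;> rcases hs.lt_or_eq with hs' | hs'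
  · -- r > 0, s > 0
    have hF : Fent r s = ENNReal.ofReal ((r - s) * (Real.log r - Real.log s)) := by
      simp [Fent, hr', hs']
    rw [hF]
    have hlr := Real.log_le_sub_one_of_pos hr'
    have hls := Real.log_le_sub_one_of_pos hs'
    have key : (r * Real.log r - r + 1) + (s * Real.log s - s + 1)
        ≤ (r - s) * (Real.log r - Real.log s) + 2 * ((r-1)*(s-1)) := by
      nlinarith [mul_le_mul_of_nonneg_left hlr hs, mul_le_mul_of_nonneg_left hls hr]
    have hφr := phi_nonneg hr
    have hφs := phi_nonneg hs
    have hFr := Freal_nonneg hr' hs'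
    rcases le_total r 1 with h1 | h1 <;> rcases le_total s 1 with h2 | h2
    · rw [ENNReal.ofReal_eq_zero.2 (by linarith : r - 1 ≤ 0),
        ENNReal.ofReal_eq_zero.2 (by linarith : s - 1 ≤ 0)]
      simp only [zero_mul, mul_zero, add_zero]
      rw [two_mul_ofReal (by linarith) (by linarith : (0:ℝ) ≤ 1 - s),
        ← ENNReal.ofReal_add hφr hφs,
        ← ENNReal.ofReal_add hFr (by nlinarith : (0:ℝ) ≤ 2 * ((1-r)*(1-s)))]
      exact ENNReal.ofReal_le_ofReal (by nlinarith [key])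
    · rw [ENNReal.ofReal_eq_zero.2 (by linarith : r - 1 ≤ 0),
        ENNReal.ofReal_eq_zero.2 (by linarith : 1 - s ≤ 0)]
      simp only [zero_mul, mul_zero, add_zero, zero_add]
      rw [two_mul_ofReal (by linarith : (0:ℝ) ≤ 1 - r) (by linarith),
        ← ENNReal.ofReal_add hφr hφs,
        ← ENNReal.ofReal_add (add_nonneg hφr hφs) (by nlinarith : (0:ℝ) ≤ 2 * ((1-r)*(s-1)))]
      exact ENNReal.ofReal_le_ofReal (by nlinarith [key])
    · rw [ENNReal.ofReal_eq_zero.2 (by linarith : 1 - r ≤ 0),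
        ENNReal.ofReal_eq_zero.2 (by linarith : s - 1 ≤ 0)]
      simp only [zero_mul, mul_zero, add_zero, zero_add]
      rw [two_mul_ofReal (by linarith : (0:ℝ) ≤ r - 1) (by linarith),
        ← ENNReal.ofReal_add hφr hφs,
        ← ENNReal.ofReal_add (add_nonneg hφr hφs) (by nlinarith : (0:ℝ) ≤ 2 * ((r-1)*(1-s)))]
      exact ENNReal.ofReal_le_ofReal (by nlinarith [key])
    · rw [ENNReal.ofReal_eq_zero.2 (by linarith : 1 - r ≤ 0),
        ENNReal.ofReal_eq_zero.2 (by linarith : 1 - s ≤ 0)]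
      simp only [zero_mul, mul_zero, add_zero]
      rw [two_mul_ofReal (by linarith : (0:ℝ) ≤ r - 1) (by linarith),
        ← ENNReal.ofReal_add hφr hφs,
        ← ENNReal.ofReal_add hFr (by nlinarith : (0:ℝ) ≤ 2 * ((r-1)*(s-1)))]
      exact ENNReal.ofReal_le_ofReal (by nlinarith [key])
  · -- r > 0, s = 0
    have hF : Fent r s = ⊤ := by
      simp [Fent, ← hs', hr'.ne', not_lt.2 (le_refl (0:ℝ))]
    rw [hF]
    simp [top_add]
  · -- r = 0, s > 0
    have hF : Fent r s = ⊤ := by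
      simp [Fent, ← hr', hs'.ne']
    rw [hF]
    simp [top_add]
  · -- r = 0, s = 0
    rw [← hr', ← hs']
    have h0 : ENNReal.ofReal (-1 : ℝ) = 0 := by norm_num
    simp [Fent, h0, one_add_one_eq_two]

lemma core {X : Type*} [MeasurableSpace X] (π : Measure X) [IsProbabilityMeasure π]
    (f : X → ℝ) (hf : Measurable f) (hf0 : ∀ x, 0 ≤ f x)
    (h1 : ∫⁻ x, ENNReal.ofReal (f x) ∂π = 1) :
    2 * ∫⁻ x, ENNReal.ofReal (f x * Real.log (f x) - f x + 1) ∂π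
      ≤ ∫⁻ x, ∫⁻ y, Fent (f x) (f y) ∂π ∂π := by
  set Φ : X → ℝ≥0∞ := fun x => ENNReal.ofReal (f x * Real.log (f x) - f x + 1) with hΦdef
  set P : X → ℝ≥0∞ := fun x => ENNReal.ofReal (f x - 1) with hPdef
  set M : X → ℝ≥0∞ := fun x => ENNReal.ofReal (1 - f x) with hMdef
  have hΦ : Measurable Φ :=
    (((hf.mul (Real.measurable_log.comp hf)).sub hf).add measurable_const).ennreal_ofReal
  have hP : Measurable P := (hf.sub measurable_const).ennreal_ofReal
  have hM : Measurable M := (measurable_const.sub hf).ennreal_ofReal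
  have hG : Measurable (Function.uncurry fun x y => Fent (f x) (f y)) :=
    measurable_Fent.comp ((hf.comp measurable_fst).prodMk (hf.comp measurable_snd))
  set E := ∫⁻ x, Φ x ∂π with hEdef
  set a := ∫⁻ x, P x ∂π with hadef
  have hPle : a ≤ 1 := by
    rw [hadef, ← h1]
    exact lintegral_mono fun x => ENNReal.ofReal_le_ofReal (by linarith [hf0 x])
  have hMa : ∫⁻ x, M x ∂π = a := by
    have hpt : ∀ x, ENNReal.ofReal (f x) + M x = P x + 1 := by
      intro x
      rcases le_total (f x) 1 with h | h
      · rw [show P x = 0 from ENNReal.ofReal_eq_zero.2 (by linarith), zero_add,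
          hMdef, ← ENNReal.ofReal_one, ← ENNReal.ofReal_add (hf0 x) (by linarith)]
        norm_num
      · rw [show M x = 0 from ENNReal.ofReal_eq_zero.2 (by linarith), add_zero,
          hPdef, ← ENNReal.ofReal_one,
          ← ENNReal.ofReal_add (by linarith : (0:ℝ) ≤ f x - 1) zero_le_one]
        norm_num
    have h2 : (∫⁻ x, ENNReal.ofReal (f x) ∂π) + ∫⁻ x, M x ∂π = (∫⁻ x, P x ∂π) + 1 := by
      rw [← lintegral_add_left hf.ennreal_ofReal]
      calc ∫⁻ x, (ENNReal.ofReal (f x) + M x) ∂π = ∫⁻ x, (P x + 1) ∂π :=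
            lintegral_congr fun x => hpt x
        _ = (∫⁻ x, P x ∂π) + 1 := by rw [lintegral_add_left hP]; simp
    rw [h1, ← hadef, add_comm a 1] at h2
    exact (ENNReal.add_right_inj ENNReal.one_ne_top).mp h2
  have hane : a ≠ ∞ := (lt_of_le_of_lt hPle ENNReal.one_lt_top).ne
  have inP : ∀ c : ℝ≥0∞, ∫⁻ y, c * P y ∂π = c * a := fun c => by
    rw [lintegral_const_mul c hP, ← hadef]
  have inM : ∀ c : ℝ≥0∞, ∫⁻ y, c * M y ∂π = c * a := fun c => by
    rw [lintegral_const_mul c hM, hMa]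
  -- the big double-integral inequality
  have big : ∫⁻ x, ∫⁻ y, (Φ x + Φ y + 2 * P x * M y + 2 * M x * P y) ∂π ∂π
      ≤ ∫⁻ x, ∫⁻ y, (Fent (f x) (f y) + 2 * P x * P y + 2 * M x * M y) ∂π ∂π := by
    refine lintegral_mono fun x => lintegral_mono fun y => ?_
    simpa only [mul_assoc] using fent_key (f x) (f y) (hf0 x) (hf0 y)
  have innerL : ∀ x, ∫⁻ y, (Φ x + Φ y + 2 * P x * M y + 2 * M x * P y) ∂π
      = Φ x + E + 2 * P x * a + 2 * M x * a := by
    intro x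
    rw [lintegral_add_left (f := fun y => Φ x + Φ y + 2 * P x * M y)
        ((measurable_const.add hΦ).add (measurable_const.mul hM)),
      lintegral_add_left (f := fun y => Φ x + Φ y) (measurable_const.add hΦ),
      lintegral_add_left (measurable_const : Measurable fun _ : X => Φ x),
      lintegral_const, measure_univ, mul_one, inM (2 * P x), inP (2 * M x), ← hEdef]
  have innerR : ∀ x, ∫⁻ y, (Fent (f x) (f y) + 2 * P x * P y + 2 * M x * M y) ∂π
      = (∫⁻ y, Fent (f x) (f y) ∂π) + 2 * P x * a + 2 * M x * a := by
    intro x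
    have hGx : Measurable fun y => Fent (f x) (f y) := hG.comp measurable_prodMk_left
    rw [lintegral_add_left (f := fun y => Fent (f x) (f y) + 2 * P x * P y)
        (hGx.add (measurable_const.mul hP)),
      lintegral_add_left hGx,
      inP (2 * P x), inM (2 * M x)]
  have outP : ∫⁻ x, 2 * P x * a ∂π = 2 * a * a := by
    calc ∫⁻ x, 2 * P x * a ∂π = ∫⁻ x, (2 * a) * P x ∂π := lintegral_congr fun x => by ring
      _ = (2 * a) * ∫⁻ x, P x ∂π := lintegral_const_mul _ hP
      _ = 2 * a * a := by rw [← hadef]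
  have outM : ∫⁻ x, 2 * M x * a ∂π = 2 * a * a := by
    calc ∫⁻ x, 2 * M x * a ∂π = ∫⁻ x, (2 * a) * M x ∂π := lintegral_congr fun x => by ring
      _ = (2 * a) * ∫⁻ x, M x ∂π := lintegral_const_mul _ hM
      _ = 2 * a * a := by rw [hMa]
  have hL : ∫⁻ x, ∫⁻ y, (Φ x + Φ y + 2 * P x * M y + 2 * M x * P y) ∂π ∂π
      = E + E + 2 * a * a + 2 * a * a := by
    rw [lintegral_congr innerL,
      lintegral_add_left (f := fun x => Φ x + E + 2 * P x * a)
        ((hΦ.add measurable_const).add ((measurable_const.mul hP).mul_const a)),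
      lintegral_add_left (f := fun x => Φ x + E) (hΦ.add measurable_const),
      lintegral_add_left hΦ, lintegral_const, measure_univ, mul_one,
      outP, outM, ← hEdef]
  have hT : Measurable fun x => ∫⁻ y, Fent (f x) (f y) ∂π := hG.lintegral_prod_right
  have hR : ∫⁻ x, ∫⁻ y, (Fent (f x) (f y) + 2 * P x * P y + 2 * M x * M y) ∂π ∂π
      = (∫⁻ x, ∫⁻ y, Fent (f x) (f y) ∂π ∂π) + 2 * a * a + 2 * a * a := by
    rw [lintegral_congr innerR,
      lintegral_add_left (f := fun x => (∫⁻ y, Fent (f x) (f y) ∂π) + 2 * P x * a)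
        (hT.add ((measurable_const.mul hP).mul_const a)),
      lintegral_add_left hT, outP, outM]
  rw [hL, hR] at big
  have hc : 2 * a * a ≠ ∞ :=
    ENNReal.mul_ne_top (ENNReal.mul_ne_top ENNReal.ofNat_ne_top hane) hane
  rw [ENNReal.add_le_add_iff_right hc, ENNReal.add_le_add_iff_right hc] at big
  calc 2 * E = E + E := two_mul E
    _ ≤ _ := big

/-- **Nonlocal logarithmic Sobolev inequality for kernels bounded below.**
If `η(x,y) ≥ C > 0` for all `x,y` and `μ ≪ π` are probability measures, then
`H(μ∣π) ≤ (1/C)·I_η(μ∣π)`. -/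
theorem nonlocal_logSobolev {X : Type*} [MeasurableSpace X]
    (π μ : Measure X) [IsProbabilityMeasure π] [IsProbabilityMeasure μ]
    (η : X → X → ℝ) (hηmeas : Measurable (Function.uncurry η))
    (C : ℝ) (hC : 0 < C) (hη : ∀ x y, C ≤ η x y)
    (hac : μ ≪ π) :
    relEnt μ π ≤ ENNReal.ofReal (1 / C) * fisher η μ π := by
  rw [relEnt, if_pos hac, fisher, if_pos hac]
  set f : X → ℝ := fun x => (μ.rnDeriv π x).toReal with hfdef
  have hf : Measurable f := (Measure.measurable_rnDeriv μ π).ennreal_toReal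
  have hf0 : ∀ x, 0 ≤ f x := fun x => ENNReal.toReal_nonneg
  have h1 : ∫⁻ x, ENNReal.ofReal (f x) ∂π = 1 := by
    have hae : ∀ᵐ x ∂π, ENNReal.ofReal (f x) = μ.rnDeriv π x :=
      (Measure.rnDeriv_lt_top μ π).mono fun x hx => ENNReal.ofReal_toReal hx.ne
    rw [lintegral_congr_ae hae, Measure.lintegral_rnDeriv hac, measure_univ]
  have hcore := core π f hf hf0 h1
  have hG : Measurable (Function.uncurry fun x y => Fent (f x) (f y)) :=
    measurable_Fent.comp ((hf.comp measurable_fst).prodMk (hf.comp measurable_snd))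
  have hT : Measurable fun x => ∫⁻ y, Fent (f x) (f y) ∂π := hG.lintegral_prod_right
  set T := ∫⁻ x, ∫⁻ y, Fent (f x) (f y) ∂π ∂π with hTdef
  set R := ∫⁻ x, ∫⁻ y,
      (if x ≠ y then Fent (f x) (f y) * ENNReal.ofReal (η x y) else 0) ∂π ∂π with hRdef
  have pull : ∫⁻ x, ∫⁻ y, Fent (f x) (f y) * ENNReal.ofReal C ∂π ∂π
      = T * ENNReal.ofReal C := by
    have hin : ∀ x, ∫⁻ y, Fent (f x) (f y) * ENNReal.ofReal C ∂π
        = (∫⁻ y, Fent (f x) (f y) ∂π) * ENNReal.ofReal C := by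
      intro x
      have hGx : Measurable fun y => Fent (f x) (f y) := hG.comp measurable_prodMk_left
      exact lintegral_mul_const _ hGx
    rw [lintegral_congr hin, lintegral_mul_const _ hT, hTdef]
  have mono : T * ENNReal.ofReal C ≤ R := by
    rw [← pull, hRdef]
    refine lintegral_mono fun x => lintegral_mono fun y => ?_
    by_cases hxy : x = y
    · subst hxy
      rw [Fent_self (f x) (hf0 x)]
      simp
    · rw [if_pos hxy]
      exact mul_le_mul' le_rfl (ENNReal.ofReal_le_ofReal (hη x y))
  have e1 : (1/2 : ℝ≥0∞) * 2 = 1 := by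
    rw [one_div]; exact ENNReal.inv_mul_cancel (by norm_num) (by norm_num)
  have e2 : ENNReal.ofReal (1/C) * ENNReal.ofReal C = 1 := by
    rw [← ENNReal.ofReal_mul (by positivity), one_div_mul_cancel hC.ne', ENNReal.ofReal_one]
  calc ∫⁻ x, ENNReal.ofReal (f x * Real.log (f x) - f x + 1) ∂π
      = ENNReal.ofReal (1/C) * ((1/2 : ℝ≥0∞)
          * ((2 * ∫⁻ x, ENNReal.ofReal (f x * Real.log (f x) - f x + 1) ∂π)
            * ENNReal.ofReal C)) := by
        rw [show ENNReal.ofReal (1/C) * ((1/2 : ℝ≥0∞)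
            * ((2 * ∫⁻ x, ENNReal.ofReal (f x * Real.log (f x) - f x + 1) ∂π)
              * ENNReal.ofReal C))
          = (ENNReal.ofReal (1/C) * ENNReal.ofReal C) * (((1/2 : ℝ≥0∞) * 2)
            * ∫⁻ x, ENNReal.ofReal (f x * Real.log (f x) - f x + 1) ∂π) from by ring,
          e1, e2, one_mul, one_mul]
    _ ≤ ENNReal.ofReal (1/C) * ((1/2 : ℝ≥0∞) * (T * ENNReal.ofReal C)) := by
        exact mul_le_mul' le_rfl (mul_le_mul' le_rfl (mul_le_mul' hcore le_rfl))
    _ ≤ ENNReal.ofReal (1/C) * ((1/2 : ℝ≥0∞) * R) :=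
        mul_le_mul' le_rfl (mul_le_mul' le_rfl mono)
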